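/- Let Ω = [0,1] with the Borel σ-algebra and ℙ the Lebesgue measure, let 𝒢 = {G} with G ≡ 1, and ℋ = {H₁, H₂} where H₁(ω) = 1 + 1_{[1/2,1]}(ω) and H₂(ω) = 1 + 1_{[0,1/2]}(ω). Then V(1) = 2/3, whereas inf_{a ≥ 0} { a + min(𝔼[(1 − aH₁)⁺], 𝔼[(1 − aH₂)⁺]) } = 3/4. Hence the dual representation V(x) = inf_{a ≥ 0} { xa + inf over 𝒢 × co(ℋ) of 𝔼[(G − aH)⁺] } fails if co(ℋ) is replaced by ℋ itself. -/

import Mathlib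

open MeasureTheory

namespace QH

variable {Ω : Type*} [MeasurableSpace Ω]

/-- The set of nonnegative measurable random variables. -/
def L0plus (Ω : Type*) [MeasurableSpace Ω] : Set (Ω → ℝ) :=
  {f | Measurable f ∧ ∀ ω, 0 ≤ f ω}

/-- A randomized test: a measurable function with values in `[0,1]`. -/
def IsRandTest (X : Ω → ℝ) : Prop :=
  Measurable X ∧ ∀ ω, X ω ∈ Set.Icc (0 : ℝ) 1

/-- The feasible randomized tests for significance level `x` and null collection `H`. -/
def Tests (μ : Measure Ω) (H : Set (Ω → ℝ)) (x : ℝ) : Set (Ω → ℝ) :=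
  {X | IsRandTest X ∧ ∀ h ∈ H, ∫ ω, h ω * X ω ∂μ ≤ x}

/-- The worst-case power of a test `X` over the alternative collection `G`. -/
noncomputable def powerInf (μ : Measure Ω) (G : Set (Ω → ℝ)) (X : Ω → ℝ) : ℝ :=
  sInf ((fun g => ∫ ω, g ω * X ω ∂μ) '' G)

/-- The value of the randomized composite hypothesis testing problem. -/
noncomputable def V (μ : Measure Ω) (G H : Set (Ω → ℝ)) (x : ℝ) : ℝ :=
  sSup (powerInf μ G '' Tests μ H x)

/-- The value of the pure composite hypothesis testing problem. -/
noncomputable def V1 (μ : Measure Ω) (G H : Set (Ω → ℝ)) (x : ℝ) : ℝ :=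
  sSup (powerInf μ G '' {X ∈ Tests μ H x | ∀ ω, X ω = 0 ∨ X ω = 1})

/-- The set `ℋₓ` of nonnegative random variables that satisfy the budget
constraint against every feasible randomized test. -/
def HxSet (μ : Measure Ω) (H : Set (Ω → ℝ)) (x : ℝ) : Set (Ω → ℝ) :=
  {h | h ∈ L0plus Ω ∧ ∀ X ∈ Tests μ H x, ∫ ω, h ω * X ω ∂μ ≤ x}

/-- A set of (nonnegative) random variables is closed under convergence in probability,
as a subset of `L⁰⁺`. -/
def ClosedInProb (μ : Measure Ω) (S : Set (Ω → ℝ)) : Prop :=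
  ∀ (f : ℕ → Ω → ℝ) (g : Ω → ℝ), (∀ n, f n ∈ S) → g ∈ L0plus Ω →
    TendstoInMeasure μ f Filter.atTop g → g ∈ S

/-- The closure of a set of random variables under convergence in probability. -/
def clProb (μ : Measure Ω) (S : Set (Ω → ℝ)) : Set (Ω → ℝ) :=
  {g | ∃ f : ℕ → Ω → ℝ, (∀ n, f n ∈ S) ∧ TendstoInMeasure μ f Filter.atTop g}

/-- Assumption (A1): `𝒢, ℋ ⊆ L⁰⁺`, `sup_{X ∈ 𝒢∪ℋ} 𝔼[X] < ∞`, and `𝒢` is convex and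
closed under convergence in probability. -/
def A1 (μ : Measure Ω) (G H : Set (Ω → ℝ)) : Prop :=
  G ⊆ L0plus Ω ∧ H ⊆ L0plus Ω ∧ (∀ f ∈ G ∪ H, Integrable f μ) ∧
  BddAbove ((fun f => ∫ ω, f ω ∂μ) '' (G ∪ H)) ∧
  Convex ℝ G ∧ ClosedInProb μ G

/-- The smallest σ-algebra making every random variable in `G ∪ H` measurable. -/
def sigmaGen (G H : Set (Ω → ℝ)) : MeasurableSpace Ω :=
  ⨆ f ∈ G ∪ H, MeasurableSpace.comap f inferInstance

/-- The Neyman–Pearson conditions at level `x` for the tuple `(Ĝ, Ĥ, â, X̂, B)`. -/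
def NPconds (μ : Measure Ω) (G H : Set (Ω → ℝ)) (x : ℝ)
    (Ghat Hhat : Ω → ℝ) (ahat : ℝ) (Xhat B : Ω → ℝ) : Prop :=
  Ghat ∈ G ∧ Hhat ∈ clProb μ (convexHull ℝ H) ∧ 0 ≤ ahat ∧ Xhat ∈ Tests μ H x ∧
  Measurable B ∧ (∀ ω, B ω ∈ Set.Icc (0 : ℝ) 1) ∧
  (∀ ω, Xhat ω = (if ahat * Hhat ω < Ghat ω then 1 else 0)
      + B ω * (if Ghat ω = ahat * Hhat ω then 1 else 0)) ∧
  (∀ h ∈ H, ∫ ω, h ω * Xhat ω ∂μ ≤ ∫ ω, Hhat ω * Xhat ω ∂μ) ∧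
  (∫ ω, Hhat ω * Xhat ω ∂μ = x) ∧
  (∀ g ∈ G, ∫ ω, Ghat ω * Xhat ω ∂μ ≤ ∫ ω, g ω * Xhat ω ∂μ)

end QH


section Aux18
open MeasureTheory Set

noncomputable def myμ : Measure ℝ := volume.restrict (Set.Icc 0 1)
noncomputable def myH1 : ℝ → ℝ := fun ω => 1 + Set.indicator (Set.Icc (1/2 : ℝ) 1) (fun _ => (1:ℝ)) ω
noncomputable def myH2 : ℝ → ℝ := fun ω => 1 + Set.indicator (Set.Icc (0:ℝ) (1/2)) (fun _ => (1:ℝ)) ω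

instance : IsFiniteMeasure myμ := by
  constructor
  rw [myμ, Measure.restrict_apply_univ]
  simp [Real.volume_Icc]

lemma intgbl {f : ℝ → ℝ} (hf : Measurable f) (C : ℝ) (hC : ∀ ω, |f ω| ≤ C) :
    Integrable f myμ :=
  (integrable_const C).mono' hf.aestronglyMeasurable (ae_of_all _ fun ω => by
    simpa using hC ω)

lemma measH1 : Measurable myH1 :=
  measurable_const.add (measurable_const.indicator measurableSet_Icc)

lemma measH2 : Measurable myH2 :=
  measurable_const.add (measurable_const.indicator measurableSet_Icc)

lemma H1mem (ω : ℝ) : 1 ≤ myH1 ω ∧ myH1 ω ≤ 2 := by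
  unfold myH1; by_cases h : ω ∈ Set.Icc (1/2:ℝ) 1
  · rw [Set.indicator_of_mem h]; norm_num
  · rw [Set.indicator_of_notMem h]; norm_num

lemma H2mem (ω : ℝ) : 1 ≤ myH2 ω ∧ myH2 ω ≤ 2 := by
  unfold myH2; by_cases h : ω ∈ Set.Icc (0:ℝ) (1/2)
  · rw [Set.indicator_of_mem h]; norm_num
  · rw [Set.indicator_of_notMem h]; norm_num

lemma intIndicator (s : Set ℝ) (hs : MeasurableSet s) :
    ∫ ω, Set.indicator s (fun _ => (1:ℝ)) ω ∂myμ = (volume (s ∩ Set.Icc (0:ℝ) 1)).toReal := by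
  rw [myμ, integral_indicator_const (1:ℝ) hs, measureReal_def, Measure.restrict_apply hs]
  simp

lemma intH1 : ∫ ω, myH1 ω ∂myμ = 3/2 := by
  unfold myH1
  rw [integral_add (integrable_const 1)
    ((integrable_const (1:ℝ)).indicator measurableSet_Icc)]
  rw [intIndicator _ measurableSet_Icc]
  have : Set.Icc (1/2:ℝ) 1 ∩ Set.Icc 0 1 = Set.Icc (1/2:ℝ) 1 := by
    apply Set.inter_eq_left.mpr; apply Set.Icc_subset_Icc <;> norm_num
  rw [this]
  simp [myμ, Real.volume_Icc, Measure.restrict_apply_univ]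
  norm_num [Real.volume_Icc]

lemma intH2 : ∫ ω, myH2 ω ∂myμ = 3/2 := by
  unfold myH2
  rw [integral_add (integrable_const 1)
    ((integrable_const (1:ℝ)).indicator measurableSet_Icc)]
  rw [intIndicator _ measurableSet_Icc]
  have : Set.Icc (0:ℝ) (1/2) ∩ Set.Icc 0 1 = Set.Icc (0:ℝ) (1/2) := by
    apply Set.inter_eq_left.mpr; apply Set.Icc_subset_Icc <;> norm_num
  rw [this]
  simp [myμ, Real.volume_Icc, Measure.restrict_apply_univ]
  norm_num [Real.volume_Icc]

-- a.e. H1 + H2 = 3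
lemma sumae : ∀ᵐ ω ∂myμ, myH1 ω + myH2 ω = 3 := by
  have h1 : ∀ᵐ ω ∂myμ, ω ∈ Set.Icc (0:ℝ) 1 := ae_restrict_mem measurableSet_Icc
  have h2 : ∀ᵐ ω ∂myμ, ω ≠ 1/2 := by
    rw [ae_iff]
    have : {ω : ℝ | ¬ ω ≠ 1/2} = {(1/2 : ℝ)} := by ext ω; simp
    rw [this, myμ, Measure.restrict_apply (measurableSet_singleton _)]
    exact le_antisymm (le_trans (measure_mono Set.inter_subset_left) (by simp)) (by simp)
  filter_upwards [h1, h2] with ω hω hne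
  rcases lt_or_gt_of_ne hne with h | h
  · have e1 : ω ∉ Set.Icc (1/2:ℝ) 1 := fun hc => absurd hc.1 (not_le.mpr h)
    have e2 : ω ∈ Set.Icc (0:ℝ) (1/2) := ⟨hω.1, le_of_lt h⟩
    simp only [myH1, myH2, Set.indicator_of_notMem e1, Set.indicator_of_mem e2]; ring
  · have e1 : ω ∈ Set.Icc (1/2:ℝ) 1 := ⟨le_of_lt h, hω.2⟩
    have e2 : ω ∉ Set.Icc (0:ℝ) (1/2) := fun hc => absurd hc.2 (not_le.mpr h)
    simp only [myH1, myH2, Set.indicator_of_mem e1, Set.indicator_of_notMem e2]; ring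


-- integrability of h * X for bounded h, X test
lemma intgblMul {h X : ℝ → ℝ} (hh : Measurable h) (hb : ∀ ω, |h ω| ≤ 2)
    (hX : Measurable X) (hXm : ∀ ω, X ω ∈ Set.Icc (0:ℝ) 1) :
    Integrable (fun ω => h ω * X ω) myμ := by
  apply intgbl (hh.mul hX) 2
  intro ω
  rw [Pi.mul_apply, abs_mul]
  calc |h ω| * |X ω| ≤ 2 * 1 := by
        apply mul_le_mul (hb ω) _ (abs_nonneg _) (by norm_num)
        rw [abs_of_nonneg (hXm ω).1]; exact (hXm ω).2
    _ = 2 := by norm_num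

lemma testBound {X : ℝ → ℝ} (hX : Measurable X) (hXm : ∀ ω, X ω ∈ Set.Icc (0:ℝ) 1)
    (h1 : ∫ ω, myH1 ω * X ω ∂myμ ≤ 1) (h2 : ∫ ω, myH2 ω * X ω ∂myμ ≤ 1) :
    ∫ ω, X ω ∂myμ ≤ 2/3 := by
  have i1 : Integrable (fun ω => myH1 ω * X ω) myμ :=
    intgblMul measH1 (fun ω => by rw [abs_of_nonneg (le_trans zero_le_one (H1mem ω).1)]; exact (H1mem ω).2) hX hXm
  have i2 : Integrable (fun ω => myH2 ω * X ω) myμ :=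
    intgblMul measH2 (fun ω => by rw [abs_of_nonneg (le_trans zero_le_one (H2mem ω).1)]; exact (H2mem ω).2) hX hXm
  have key : ∫ ω, (3 : ℝ) * X ω ∂myμ ≤ 2 := by
    have : ∫ ω, (3 : ℝ) * X ω ∂myμ = ∫ ω, (myH1 ω * X ω + myH2 ω * X ω) ∂myμ := by
      apply integral_congr_ae
      filter_upwards [sumae] with ω hω
      rw [← add_mul, hω]
    rw [this, integral_add i1 i2]
    linarith
  rw [integral_const_mul] at key
  linarith


lemma powerInfEq (X : ℝ → ℝ) :
    QH.powerInf myμ {fun _ => (1:ℝ)} X = ∫ ω, X ω ∂myμ := by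
  rw [QH.powerInf, Set.image_singleton, csInf_singleton]
  simp

lemma twothirds_mem : (fun _ => (2/3 : ℝ)) ∈ QH.Tests myμ {myH1, myH2} 1 := by
  constructor
  · exact ⟨measurable_const, fun ω => ⟨by norm_num, by norm_num⟩⟩
  · intro h hh
    rcases hh with rfl | rfl
    · rw [integral_mul_const, intH1]; norm_num
    · rw [integral_mul_const, intH2]; norm_num

lemma Vub : ∀ y ∈ QH.powerInf myμ {fun _ => (1:ℝ)} '' QH.Tests myμ {myH1, myH2} 1,
    y ≤ 2/3 := by
  rintro y ⟨X, ⟨⟨hXm, hXmem⟩, hcon⟩, rfl⟩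
  rw [powerInfEq]
  exact testBound hXm hXmem (hcon myH1 (Or.inl rfl)) (hcon myH2 (Or.inr rfl))

lemma Vval : QH.V myμ {fun _ => (1:ℝ)} {myH1, myH2} 1 = 2/3 := by
  rw [QH.V]
  apply le_antisymm
  · exact csSup_le ⟨_, (fun _ => (2/3:ℝ)), twothirds_mem, rfl⟩ Vub
  · have hmem : (2/3 : ℝ) ∈ QH.powerInf myμ {fun _ => (1:ℝ)} '' QH.Tests myμ {myH1, myH2} 1 := by
      refine ⟨fun _ => (2/3:ℝ), twothirds_mem, ?_⟩
      rw [powerInfEq, integral_const]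
      simp [myμ, Measure.restrict_apply_univ, Real.volume_Icc]
    exact le_csSup ⟨2/3, Vub⟩ hmem

-- value at a = 1/2, H1
lemma gval1 : ∫ ω, max (1 - (1/2:ℝ) * myH1 ω) 0 ∂myμ = 1/4 := by
  have heq : (fun ω => max (1 - (1/2:ℝ) * myH1 ω) 0)
      = fun ω => 1/2 - Set.indicator (Set.Icc (1/2:ℝ) 1) (fun _ => (1:ℝ)) ω * (1/2) := by
    funext ω
    by_cases h : ω ∈ Set.Icc (1/2:ℝ) 1
    · simp only [myH1, Set.indicator_of_mem h]; norm_num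
    · simp only [myH1, Set.indicator_of_notMem h]; norm_num
  rw [heq, integral_sub (integrable_const _)
    (((integrable_const (1:ℝ)).indicator measurableSet_Icc).mul_const _)]
  rw [integral_mul_const, integral_indicator_const (1:ℝ) measurableSet_Icc,
    integral_const]
  simp only [measureReal_def]
  rw [myμ, Measure.restrict_apply measurableSet_Icc, Measure.restrict_apply_univ]
  have : Set.Icc (1/2:ℝ) 1 ∩ Set.Icc 0 1 = Set.Icc (1/2:ℝ) 1 :=
    Set.inter_eq_left.mpr (Set.Icc_subset_Icc (by norm_num) le_rfl)
  rw [this]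
  norm_num [Real.volume_Icc]

lemma gval2 : ∫ ω, max (1 - (1/2:ℝ) * myH2 ω) 0 ∂myμ = 1/4 := by
  have heq : (fun ω => max (1 - (1/2:ℝ) * myH2 ω) 0)
      = fun ω => 1/2 - Set.indicator (Set.Icc (0:ℝ) (1/2)) (fun _ => (1:ℝ)) ω * (1/2) := by
    funext ω
    by_cases h : ω ∈ Set.Icc (0:ℝ) (1/2)
    · simp only [myH2, Set.indicator_of_mem h]; norm_num
    · simp only [myH2, Set.indicator_of_notMem h]; norm_num
  rw [heq, integral_sub (integrable_const _)
    (((integrable_const (1:ℝ)).indicator measurableSet_Icc).mul_const _)]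
  rw [integral_mul_const, integral_indicator_const (1:ℝ) measurableSet_Icc,
    integral_const]
  simp only [measureReal_def]
  rw [myμ, Measure.restrict_apply measurableSet_Icc, Measure.restrict_apply_univ]
  have : Set.Icc (0:ℝ) (1/2) ∩ Set.Icc 0 1 = Set.Icc (0:ℝ) (1/2) :=
    Set.inter_eq_left.mpr (Set.Icc_subset_Icc le_rfl (by norm_num))
  rw [this]
  norm_num [Real.volume_Icc]

-- integrability of the max integrand
lemma intgblMax (a : ℝ) (h0 : 0 ≤ a) {H : ℝ → ℝ} (hH : Measurable H)
    (hb : ∀ ω, 1 ≤ H ω ∧ H ω ≤ 2) :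
    Integrable (fun ω => max (1 - a * H ω) 0) myμ := by
  apply intgbl ((measurable_const.sub (hH.const_mul a)).max measurable_const) 1
  intro ω
  rw [abs_of_nonneg (le_max_right _ _)]
  apply max_le _ zero_le_one
  have := (hb ω).1
  show 1 - a * H ω ≤ 1
  nlinarith

-- lower bound, small a: 1 - (3/2) a ≤ g(a), for H with ∫H = 3/2
lemma lb_small (a : ℝ) (h0 : 0 ≤ a) {H : ℝ → ℝ} (hH : Measurable H)
    (hb : ∀ ω, 1 ≤ H ω ∧ H ω ≤ 2) (hi : ∫ ω, H ω ∂myμ = 3/2) :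
    1 - (3/2) * a ≤ ∫ ω, max (1 - a * H ω) 0 ∂myμ := by
  have ih : Integrable H myμ := intgbl hH 2 (fun ω => by
    rw [abs_of_nonneg (le_trans zero_le_one (hb ω).1)]; exact (hb ω).2)
  have hlow : ∫ ω, (1 - a * H ω) ∂myμ = 1 - (3/2) * a := by
    rw [integral_sub (integrable_const _) (ih.const_mul a), integral_const_mul, hi,
      integral_const]
    simp only [measureReal_def]
    rw [myμ, Measure.restrict_apply_univ]
    norm_num [Real.volume_Icc]
    ring
  rw [← hlow]
  apply integral_mono (integrable_const (1:ℝ) |>.sub (ih.const_mul a))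
    (intgblMax a h0 hH hb)
  intro ω
  exact le_max_left _ _

-- lower bound, mid a for H1: (1-a)/2 ≤ g1(a)
lemma lb_mid1 (a : ℝ) (h0 : 0 ≤ a) (h1 : a ≤ 1) :
    (1 - a) * (1/2) ≤ ∫ ω, max (1 - a * myH1 ω) 0 ∂myμ := by
  have hlow : ∫ ω, Set.indicator (Set.Ico (0:ℝ) (1/2)) (fun _ => 1 - a) ω ∂myμ
      = (1 - a) * (1/2) := by
    rw [integral_indicator_const _ measurableSet_Ico, myμ, measureReal_def,
      Measure.restrict_apply measurableSet_Ico]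
    have : Set.Ico (0:ℝ) (1/2) ∩ Set.Icc 0 1 = Set.Ico (0:ℝ) (1/2) :=
      Set.inter_eq_left.mpr (fun x hx => ⟨hx.1, le_of_lt (lt_of_lt_of_le hx.2 (by norm_num))⟩)
    rw [this]
    norm_num [Real.volume_Ico]
    ring
  rw [← hlow]
  apply integral_mono ((integrable_const _).indicator measurableSet_Ico)
    (intgblMax a h0 measH1 H1mem)
  intro ω
  by_cases h : ω ∈ Set.Ico (0:ℝ) (1/2)
  · rw [Set.indicator_of_mem h]
    have hne : ω ∉ Set.Icc (1/2:ℝ) 1 := fun hc => absurd hc.1 (not_le.mpr h.2)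
    have : myH1 ω = 1 := by simp only [myH1, Set.indicator_of_notMem hne]; norm_num
    calc (1 - a) = 1 - a * myH1 ω := by rw [this]; ring
      _ ≤ _ := le_max_left _ _
  · rw [Set.indicator_of_notMem h]
    exact le_max_right _ _

lemma lb_mid2 (a : ℝ) (h0 : 0 ≤ a) (h1 : a ≤ 1) :
    (1 - a) * (1/2) ≤ ∫ ω, max (1 - a * myH2 ω) 0 ∂myμ := by
  have hlow : ∫ ω, Set.indicator (Set.Ioc (1/2:ℝ) 1) (fun _ => 1 - a) ω ∂myμ
      = (1 - a) * (1/2) := by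
    rw [integral_indicator_const _ measurableSet_Ioc, myμ, measureReal_def,
      Measure.restrict_apply measurableSet_Ioc]
    have : Set.Ioc (1/2:ℝ) 1 ∩ Set.Icc 0 1 = Set.Ioc (1/2:ℝ) 1 :=
      Set.inter_eq_left.mpr (fun x hx => ⟨le_of_lt (lt_of_le_of_lt (by norm_num) hx.1), hx.2⟩)
    rw [this]
    norm_num [Real.volume_Ioc]
    ring
  rw [← hlow]
  apply integral_mono ((integrable_const _).indicator measurableSet_Ioc)
    (intgblMax a h0 measH2 H2mem)
  intro ω
  by_cases h : ω ∈ Set.Ioc (1/2:ℝ) 1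
  · rw [Set.indicator_of_mem h]
    have hne : ω ∉ Set.Icc (0:ℝ) (1/2) := fun hc => absurd hc.2 (not_le.mpr h.1)
    have : myH2 ω = 1 := by simp only [myH2, Set.indicator_of_notMem hne]; norm_num
    calc (1 - a) = 1 - a * myH2 ω := by rw [this]; ring
      _ ≤ _ := le_max_left _ _
  · rw [Set.indicator_of_notMem h]
    exact le_max_right _ _

lemma dual_lb (a : ℝ) (h0 : 0 ≤ a) :
    3/4 ≤ a + min (∫ ω, max (1 - a * myH1 ω) 0 ∂myμ) (∫ ω, max (1 - a * myH2 ω) 0 ∂myμ) := by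
  have g1nn : 0 ≤ ∫ ω, max (1 - a * myH1 ω) 0 ∂myμ :=
    integral_nonneg fun ω => le_max_right _ _
  have g2nn : 0 ≤ ∫ ω, max (1 - a * myH2 ω) 0 ∂myμ :=
    integral_nonneg fun ω => le_max_right _ _
  rcases le_or_gt a (1/2) with h | h
  · have b1 := lb_small a h0 measH1 H1mem intH1
    have b2 := lb_small a h0 measH2 H2mem intH2
    have : 1 - (3/2) * a ≤ min _ _ := le_min b1 b2
    linarith [this]
  · rcases le_or_gt a (3/4) with h' | h'
    · have b1 := lb_mid1 a h0 (by linarith)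
      have b2 := lb_mid2 a h0 (by linarith)
      have : (1 - a) * (1/2) ≤ min _ _ := le_min b1 b2
      linarith [this]
    · have : (0:ℝ) ≤ min _ _ := le_min g1nn g2nn
      linarith [this]

lemma dualval : sInf ((fun a => a + min (∫ ω, max (1 - a * myH1 ω) 0 ∂myμ)
    (∫ ω, max (1 - a * myH2 ω) 0 ∂myμ)) '' Set.Ici (0:ℝ)) = 3/4 := by
  apply le_antisymm
  · apply csInf_le
    · exact ⟨3/4, by rintro y ⟨a, ha, rfl⟩; exact dual_lb a ha⟩
    · refine ⟨1/2, by norm_num, ?_⟩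
      show (1/2 : ℝ) + min (∫ ω, max (1 - (1/2:ℝ) * myH1 ω) 0 ∂myμ)
        (∫ ω, max (1 - (1/2:ℝ) * myH2 ω) 0 ∂myμ) = 3/4
      rw [gval1, gval2]; norm_num
  · exact le_csInf ⟨_, 0, Set.mem_Ici.mpr le_rfl, rfl⟩
      (by rintro y ⟨a, ha, rfl⟩; exact dual_lb a ha)

end Aux18

/-- On `Ω = [0,1]` with Lebesgue measure, `𝒢 = {1}` and `ℋ = {H₁, H₂}`
where `H₁ = 1 + 1_{[1/2,1]}` and `H₂ = 1 + 1_{[0,1/2]}`, we have `V(1) = 2/3`, whereas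
`inf_{a ≥ 0} { a + min(𝔼[(1 − aH₁)⁺], 𝔼[(1 − aH₂)⁺]) } = 3/4 > 2/3 = V(1)`: the dual
representation fails if `co(ℋ)` is replaced by `ℋ`. -/
theorem stmt_18 :
    let μ : MeasureTheory.Measure ℝ := MeasureTheory.volume.restrict (Set.Icc 0 1)
    let H1 : ℝ → ℝ := fun ω => 1 + Set.indicator (Set.Icc (1 / 2 : ℝ) 1) (fun _ => (1 : ℝ)) ω
    let H2 : ℝ → ℝ := fun ω => 1 + Set.indicator (Set.Icc (0 : ℝ) (1 / 2)) (fun _ => (1 : ℝ)) ω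
    QH.V μ {fun _ => 1} {H1, H2} 1 = 2 / 3 ∧
    sInf ((fun a => a + min (∫ ω, max (1 - a * H1 ω) 0 ∂μ)
        (∫ ω, max (1 - a * H2 ω) 0 ∂μ)) '' Set.Ici (0 : ℝ)) = 3 / 4 ∧
    QH.V μ {fun _ => 1} {H1, H2} 1 <
      sInf ((fun a => a + min (∫ ω, max (1 - a * H1 ω) 0 ∂μ)
        (∫ ω, max (1 - a * H2 ω) 0 ∂μ)) '' Set.Ici (0 : ℝ)) := by
  intro μ H1 H2
  have h3 : QH.V myμ {fun _ => (1:ℝ)} {myH1, myH2} 1 <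
      sInf ((fun a => a + min (∫ ω, max (1 - a * myH1 ω) 0 ∂myμ)
        (∫ ω, max (1 - a * myH2 ω) 0 ∂myμ)) '' Set.Ici (0 : ℝ)) := by
    rw [Vval, dualval]; norm_num
  exact ⟨Vval, dualval, h3⟩
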